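/- Let j ∈ ℕ, let K : ℝ → ℝ be measurable with ξ ↦ ξ^jK(ξ) ∈ L¹(ℝ), let y : ℝ → ℝ be continuous and 2π-periodic, let k, θ, X ∈ ℝ, and let H : ℝ → ℝ be measurable. Assume: (i) for each ε ∈ (0,1], the function ξ ↦ ξ^jK(ξ)y(θ−kξ)H(X−εξ) belongs to L¹(ℝ); (ii) for every ξ ∈ ℝ, H(X−εξ) → 0 as ε → 0⁺; (iii) there exists ξ₀ > 0 such that s ↦ |H(X−s)| is monotone nondecreasing on [ξ₀, ∞), s ↦ |H(X+s)| is monotone nondecreasing on [ξ₀, ∞), and |H| is bounded on the interval [X−ξ₀, X+ξ₀]. Then lim_{ε→0⁺} ∫_ℝ ξ^jK(ξ)y(θ−kξ)H(X−εξ)dξ = 0. -/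

import Mathlib

open MeasureTheory Real Filter Topology

/-- Lemma A.1 of the paper: under a pointwise vanishing condition and a
monotone-domination condition on `H`, the convolution-type integrals
`∫ ξ^j K(ξ) y(θ−kξ) H(X−εξ) dξ` tend to `0` as `ε → 0⁺`. -/
theorem remainder_convolution_tendsto_zero
    (j : ℕ) (K : ℝ → ℝ) (hKm : Measurable K)
    (hKj : Integrable (fun ξ => ξ ^ j * K ξ))
    (y : ℝ → ℝ) (hy : Continuous y) (hyp : Function.Periodic y (2 * π))
    (k θ X : ℝ) (H : ℝ → ℝ) (hHm : Measurable H)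
    (hint : ∀ ε ∈ Set.Ioc (0:ℝ) 1,
      Integrable (fun ξ => ξ ^ j * K ξ * y (θ - k * ξ) * H (X - ε * ξ)))
    (hlim : ∀ ξ : ℝ, Tendsto (fun ε => H (X - ε * ξ)) (nhdsWithin 0 (Set.Ioi 0)) (nhds 0))
    (hmono : ∃ ξ₀ > (0:ℝ),
      MonotoneOn (fun s => |H (X - s)|) (Set.Ici ξ₀) ∧
      MonotoneOn (fun s => |H (X + s)|) (Set.Ici ξ₀) ∧
      ∃ m, ∀ s ∈ Set.Icc (X - ξ₀) (X + ξ₀), |H s| ≤ m) :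
    Tendsto (fun ε => ∫ ξ : ℝ, ξ ^ j * K ξ * y (θ - k * ξ) * H (X - ε * ξ))
      (nhdsWithin 0 (Set.Ioi 0)) (nhds 0) := by
  obtain ⟨ξ₀, hξ₀, hmL, hmR, m, hm⟩ := hmono
  -- y is bounded
  obtain ⟨Cy, hCy⟩ : ∃ C, ∀ x, |y x| ≤ C := by
    have hb := hyp.isBounded_of_continuous (by positivity) hy
    obtain ⟨C, hC⟩ := isBounded_iff_forall_norm_le.1 hb
    exact ⟨C, fun x => hC _ (Set.mem_range_self x)⟩
  have hm0 : 0 ≤ m := le_trans (abs_nonneg _) (hm X ⟨by linarith, by linarith⟩)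
  -- key pointwise bound
  have key : ∀ ε ∈ Set.Ioc (0:ℝ) 1, ∀ ξ : ℝ,
      |H (X - ε * ξ)| ≤ m + |H (X - ξ)| := by
    rintro ε ⟨hε0, hε1⟩ ξ
    rcases le_or_gt (|ε * ξ|) ξ₀ with h | h
    · have : |H (X - ε * ξ)| ≤ m := by
        refine hm _ ⟨?_, ?_⟩
        · linarith [le_abs_self (ε*ξ)]
        · linarith [neg_abs_le (ε*ξ)]
      have := abs_nonneg (H (X - ξ))
      linarith
    · rcases le_or_gt 0 ξ with hξ | hξ
      · have hεξ : ε * ξ = |ε * ξ| := (abs_of_nonneg (by positivity)).symm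
        have h1 : ξ₀ ≤ ε * ξ := by rw [hεξ]; exact h.le
        have h2 : ε * ξ ≤ ξ := by nlinarith
        have := hmL h1 (le_trans h1 h2) h2
        simpa using (by linarith [this] : |H (X - ε * ξ)| ≤ m + |H (X - ξ)|)
      · have hεξ : -(ε * ξ) = |ε * ξ| := by
          rw [abs_of_nonpos (by nlinarith)]
        have h1 : ξ₀ ≤ -(ε * ξ) := by rw [hεξ]; exact h.le
        have h2 : -(ε * ξ) ≤ -ξ := by nlinarith
        have h3 := hmR h1 (le_trans h1 h2) h2
        simp only [← sub_eq_add_neg] at h3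
        linarith
  set f : ℝ → ℝ := fun ξ => ξ ^ j * K ξ * y (θ - k * ξ)
  have hfm : AEStronglyMeasurable f (volume : Measure ℝ) :=
    (((measurable_id.pow_const j).mul hKm).mul
      (hy.measurable.comp (measurable_const.sub (measurable_const.mul measurable_id)))).aestronglyMeasurable
  have hf_int : Integrable f := by
    have := hKj.bdd_mul (f := fun ξ => y (θ - k * ξ)) (c := Cy)
      ((hy.comp (continuous_const.sub (continuous_const.mul continuous_id))).aestronglyMeasurable)
      (Filter.Eventually.of_forall fun x => by simpa [Real.norm_eq_abs] using hCy (θ - k * x))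
    simpa [f, mul_comm, mul_assoc, mul_left_comm] using this
  have hf1 : Integrable (fun ξ => f ξ * H (X - ξ)) := by
    have := hint 1 ⟨one_pos, le_refl 1⟩
    simpa [f, one_mul] using this
  -- the bound function
  have main : Tendsto (fun ε => ∫ ξ : ℝ, ξ ^ j * K ξ * y (θ - k * ξ) * H (X - ε * ξ))
      (nhdsWithin 0 (Set.Ioi 0)) (nhds (∫ _ : ℝ, (0:ℝ)))
  swap
  · simpa using main
  refine tendsto_integral_filter_of_dominated_convergence
    (fun ξ => m * |f ξ| + |f ξ * H (X - ξ)|) ?_ ?_ ?_ ?_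
  · filter_upwards [Ioc_mem_nhdsGT (zero_lt_one)] with ε hε
    exact (hint ε hε).aestronglyMeasurable
  · filter_upwards [Ioc_mem_nhdsGT (zero_lt_one)] with ε hε
    filter_upwards with ξ
    have hk := key ε hε ξ
    have : |f ξ * H (X - ε * ξ)| = |f ξ| * |H (X - ε * ξ)| := abs_mul _ _
    calc ‖f ξ * H (X - ε * ξ)‖ = |f ξ| * |H (X - ε * ξ)| := by
          rw [Real.norm_eq_abs, abs_mul]
      _ ≤ |f ξ| * (m + |H (X - ξ)|) := by
          exact mul_le_mul_of_nonneg_left hk (abs_nonneg _)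
      _ = m * |f ξ| + |f ξ * H (X - ξ)| := by
          rw [mul_add, ← abs_mul, mul_comm (|f ξ|) m]
  · exact ((hf_int.abs.const_mul m).add hf1.abs)
  · filter_upwards with ξ
    have := (hlim ξ).const_mul (f ξ)
    simpa using this
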